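/- (Riccati Driving Function Comparison) Let f, g be real solutions of f' = -f² - H and g' = -g² - K on intervals starting at 0, where H, K are continuous with H ≥ K, and f(0) = g(0) (finite). Then g exists on at least as large an interval [0,a) as f does, and f ≤ g on that interval. -/

import Mathlib

open MeasureTheory intervalIntegral Set Filter

noncomputable def rW (f : ℝ → ℝ) (t : ℝ) : ℝ := Real.exp (∫ s in (0:ℝ)..t, f s)

noncomputable def rV (f q : ℝ → ℝ) : ℕ → ℝ → ℝ
  | 0 => rW f
  | n+1 => fun t => rW f t * ∫ s in (0:ℝ)..t,
      (∫ τ in (0:ℝ)..s, q τ * rV f q n τ * rW f τ) / (rW f s)^2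

noncomputable def rP (f q : ℝ → ℝ) (n : ℕ) (t : ℝ) : ℝ :=
  ∫ τ in (0:ℝ)..t, q τ * rV f q n τ * rW f τ

lemma rV_succ (f q : ℝ → ℝ) (n : ℕ) (t : ℝ) :
    rV f q (n+1) t = rW f t * ∫ s in (0:ℝ)..t, rP f q n s / (rW f s)^2 := rfl

lemma rW_pos (f : ℝ → ℝ) (t : ℝ) : 0 < rW f t := Real.exp_pos _

lemma primCont {a : ℝ} {h : ℝ → ℝ}
    (hint : ∀ b ∈ Ico (0:ℝ) a, IntegrableOn h (Icc 0 b)) :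
    ContinuousOn (fun t => ∫ s in (0:ℝ)..t, h s) (Ico 0 a) := by
  intro t ht
  have h0t : (0:ℝ) ≤ t := ht.1
  have hta : t < a := ht.2
  have hb : (t + a)/2 ∈ Ico (0:ℝ) a := ⟨by linarith, by linarith⟩
  have h0b : (0:ℝ) ≤ (t + a)/2 := hb.1
  have h1 : ContinuousOn (fun t => ∫ s in (0:ℝ)..t, h s) (Icc 0 ((t+a)/2)) := by
    have := continuousOn_primitive_interval (a := (0:ℝ)) (b := (t+a)/2) (μ := volume)
      (f := h) (by rw [uIcc_of_le h0b]; exact hint _ hb)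
    rwa [uIcc_of_le h0b] at this
  have h2 : Icc (0:ℝ) ((t+a)/2) ∈ nhdsWithin t (Ico 0 a) :=
    mem_nhdsWithin.mpr ⟨Iio ((t+a)/2), isOpen_Iio, by simpa using by linarith,
      fun x hx => ⟨hx.2.1, le_of_lt hx.1⟩⟩
  exact (h1 t ⟨h0t, by linarith⟩).mono_of_mem_nhdsWithin h2

section

variable {a : ℝ} {f q : ℝ → ℝ}

lemma contIco_integrableOn (hc : ContinuousOn f (Ico 0 a)) {b : ℝ} (hb : b ∈ Ico (0:ℝ) a) :
    IntegrableOn f (Icc 0 b) := (hc.mono (Icc_subset_Ico_right hb.2)).integrableOn_Icc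

lemma rW_cont (hfc : ContinuousOn f (Ico 0 a)) : ContinuousOn (rW f) (Ico 0 a) :=
  Real.continuous_exp.comp_continuousOn (primCont (fun _ hb => contIco_integrableOn hfc hb))

lemma rVP_cont (hfc : ContinuousOn f (Ico 0 a)) (hqc : ContinuousOn q (Ico 0 a)) :
    ∀ n, ContinuousOn (rV f q n) (Ico 0 a) ∧ ContinuousOn (rP f q n) (Ico 0 a) := by
  have hw := rW_cont hfc
  intro n
  induction n with
  | zero =>
      refine ⟨hw, ?_⟩
      exact primCont (fun b hb => contIco_integrableOn ((hqc.mul hw).mul hw) hb)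
  | succ n ih =>
      have hP : ContinuousOn (rP f q n) (Ico 0 a) := by
        exact primCont (fun b hb => contIco_integrableOn ((hqc.mul ih.1).mul hw) hb)
      have hV : ContinuousOn (rV f q (n+1)) (Ico 0 a) := by
        have : ContinuousOn (fun s => rP f q n s / (rW f s)^2) (Ico 0 a) :=
          hP.div (hw.pow 2) (fun s _ => pow_ne_zero 2 (rW_pos f s).ne')
        have h2 := primCont (fun b hb => contIco_integrableOn this hb)
        rw [funext (rV_succ f q n)]; exact hw.mul h2
      refine ⟨hV, ?_⟩
      exact primCont (fun b hb => contIco_integrableOn ((hqc.mul hV).mul hw) hb)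

lemma rVP_nonneg (hq0 : ∀ t ∈ Ico (0:ℝ) a, 0 ≤ q t) :
    ∀ n, (∀ t ∈ Ico (0:ℝ) a, 0 ≤ rV f q n t) ∧ (∀ t ∈ Ico (0:ℝ) a, 0 ≤ rP f q n t) := by
  intro n
  induction n with
  | zero =>
      refine ⟨fun t _ => (rW_pos f t).le, fun t ht => ?_⟩
      refine intervalIntegral.integral_nonneg ht.1 (fun u hu => ?_)
      have hu' : u ∈ Ico (0:ℝ) a := ⟨hu.1, lt_of_le_of_lt hu.2 ht.2⟩
      exact mul_nonneg (mul_nonneg (hq0 u hu') (rW_pos f u).le) (rW_pos f u).le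
  | succ n ih =>
      have hV : ∀ t ∈ Ico (0:ℝ) a, 0 ≤ rV f q (n+1) t := by
        intro t ht
        rw [rV_succ]
        refine mul_nonneg (rW_pos f t).le (intervalIntegral.integral_nonneg ht.1 (fun u hu => ?_))
        have hu' : u ∈ Ico (0:ℝ) a := ⟨hu.1, lt_of_le_of_lt hu.2 ht.2⟩
        exact div_nonneg (ih.2 u hu') (by positivity)
      refine ⟨hV, fun t ht => ?_⟩
      refine intervalIntegral.integral_nonneg ht.1 (fun u hu => ?_)
      have hu' : u ∈ Ico (0:ℝ) a := ⟨hu.1, lt_of_le_of_lt hu.2 ht.2⟩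
      exact mul_nonneg (mul_nonneg (hq0 u hu') (hV u hu')) (rW_pos f u).le


lemma rVP_bound (hfc : ContinuousOn f (Ico 0 a)) (hqc : ContinuousOn q (Ico 0 a))
    (hq0 : ∀ t ∈ Ico (0:ℝ) a, 0 ≤ q t) {t : ℝ} (ht : t ∈ Ico (0:ℝ) a) :
    ∃ D A C : ℝ, 1 ≤ D ∧ 1 ≤ A ∧ 1 ≤ C ∧
      ∀ n : ℕ, (∀ s ∈ Icc (0:ℝ) t, rV f q n s ≤ D * (C^n * s^(2*n) / n.factorial)) ∧
        (∀ s ∈ Icc (0:ℝ) t, rP f q n s ≤ A * D * (C^n * s^(2*n+1) / ((2*n+1) * n.factorial))) := by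
  have hsub : Icc (0:ℝ) t ⊆ Ico 0 a := Icc_subset_Ico_right ht.2
  have hw := rW_cont hfc
  obtain ⟨D₀, hD₀⟩ := isCompact_Icc.exists_bound_of_continuousOn (hw.mono hsub)
  obtain ⟨A₀, hA₀⟩ := isCompact_Icc.exists_bound_of_continuousOn ((hqc.mono hsub).mul (hw.mono hsub))
  obtain ⟨B₀, hB₀⟩ := isCompact_Icc.exists_bound_of_continuousOn
    (((hw.mono hsub).pow 2).inv₀ (fun s _ => pow_ne_zero 2 (rW_pos f s).ne'))
  set D := max 1 D₀ with hDdef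
  set A := max 1 A₀ with hAdef
  set B := max 1 B₀ with hBdef
  have hD1 : (1:ℝ) ≤ D := le_max_left _ _
  have hA1 : (1:ℝ) ≤ A := le_max_left _ _
  have hB1 : (1:ℝ) ≤ B := le_max_left _ _
  have hDA : (1:ℝ) ≤ D*A := by nlinarith
  have hC1 : (1:ℝ) ≤ D*A*B := by nlinarith
  refine ⟨D, A, D*A*B, hD1, hA1, hC1, ?_⟩
  set C := D*A*B with hCdef
  have hC0 : (0:ℝ) < C := lt_of_lt_of_le one_pos hC1
  have hD0 : (0:ℝ) < D := lt_of_lt_of_le one_pos hD1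
  have hA0 : (0:ℝ) < A := lt_of_lt_of_le one_pos hA1
  have hB0 : (0:ℝ) < B := lt_of_lt_of_le one_pos hB1
  have hwD : ∀ s ∈ Icc (0:ℝ) t, rW f s ≤ D :=
    fun s hs => le_trans (le_trans (le_abs_self _) (hD₀ s hs)) (le_max_right _ _)
  have hqwA : ∀ s ∈ Icc (0:ℝ) t, q s * rW f s ≤ A :=
    fun s hs => le_trans (le_trans (le_abs_self _) (hA₀ s hs)) (le_max_right _ _)
  have hinvB : ∀ s ∈ Icc (0:ℝ) t, ((rW f s)^2)⁻¹ ≤ B :=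
    fun s hs => le_trans (le_trans (le_abs_self _) (hB₀ s hs)) (le_max_right _ _)
  have hnn := rVP_nonneg (f := f) hq0
  have hVP : ∀ n : ℕ, (∀ s ∈ Icc (0:ℝ) t, rV f q n s ≤ D * (C^n * s^(2*n) / n.factorial)) →
      (∀ s ∈ Icc (0:ℝ) t, rP f q n s ≤ A * D * (C^n * s^(2*n+1) / ((2*n+1) * n.factorial))) := by
    intro n hV s hs
    have hF : (0:ℝ) < n.factorial := by exact_mod_cast n.factorial_pos
    have hs' : Icc (0:ℝ) s ⊆ Icc 0 t := Icc_subset_Icc_right hs.2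
    have int1 : IntervalIntegrable (fun τ => q τ * rV f q n τ * rW f τ) volume 0 s := by
      apply ContinuousOn.intervalIntegrable
      rw [uIcc_of_le hs.1]
      exact (((hqc.mul (rVP_cont hfc hqc n).1).mul hw).mono (hs'.trans hsub))
    have int2 : IntervalIntegrable (fun τ : ℝ => A * D * C^n / n.factorial * τ^(2*n)) volume 0 s :=
      (continuous_const.mul (continuous_pow _)).intervalIntegrable 0 s
    have key : rP f q n s ≤ ∫ τ in (0:ℝ)..s, A * D * C^n / n.factorial * τ^(2*n) := by
      refine intervalIntegral.integral_mono_on hs.1 int1 int2 (fun τ hτ => ?_)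
      have hτt : τ ∈ Icc (0:ℝ) t := hs' hτ
      have hτa : τ ∈ Ico (0:ℝ) a := hsub hτt
      have e1 : q τ * rV f q n τ * rW f τ = (q τ * rW f τ) * rV f q n τ := by ring
      rw [e1]
      calc (q τ * rW f τ) * rV f q n τ ≤ A * (D * (C^n * τ^(2*n) / n.factorial)) :=
            mul_le_mul (hqwA τ hτt) (hV τ hτt) ((hnn n).1 τ hτa) (by linarith)
        _ = A * D * C^n / n.factorial * τ^(2*n) := by ring
    refine key.trans_eq ?_
    rw [intervalIntegral.integral_const_mul, integral_pow,
      zero_pow (by omega : 2*n+1 ≠ 0)]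
    have h2n1 : (2*(n:ℝ)+1) ≠ 0 := by positivity
    push_cast
    field_simp
    ring
  have hPV : ∀ n : ℕ,
      (∀ s ∈ Icc (0:ℝ) t, rP f q n s ≤ A * D * (C^n * s^(2*n+1) / ((2*n+1) * n.factorial))) →
      (∀ s ∈ Icc (0:ℝ) t, rV f q (n+1) s ≤ D * (C^(n+1) * s^(2*(n+1)) / (n+1).factorial)) := by
    intro n hP s hs
    have hF : (0:ℝ) < n.factorial := by exact_mod_cast n.factorial_pos
    have hs' : Icc (0:ℝ) s ⊆ Icc 0 t := Icc_subset_Icc_right hs.2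
    have int1 : IntervalIntegrable (fun σ => rP f q n σ / (rW f σ)^2) volume 0 s := by
      apply ContinuousOn.intervalIntegrable
      rw [uIcc_of_le hs.1]
      exact ((rVP_cont hfc hqc n).2.div (hw.pow 2)
        (fun x _ => pow_ne_zero 2 (rW_pos f x).ne')).mono (hs'.trans hsub)
    have int2 : IntervalIntegrable
        (fun σ : ℝ => B * (A * D * C^n) / ((2*n+1) * n.factorial) * σ^(2*n+1)) volume 0 s :=
      (continuous_const.mul (continuous_pow _)).intervalIntegrable 0 s
    have key : (∫ σ in (0:ℝ)..s, rP f q n σ / (rW f σ)^2)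
        ≤ ∫ σ in (0:ℝ)..s, B * (A * D * C^n) / ((2*n+1) * n.factorial) * σ^(2*n+1) := by
      refine intervalIntegral.integral_mono_on hs.1 int1 int2 (fun σ hσ => ?_)
      have hσt : σ ∈ Icc (0:ℝ) t := hs' hσ
      have hσa : σ ∈ Ico (0:ℝ) a := hsub hσt
      have hσ0 : (0:ℝ) ≤ σ := hσ.1
      have e1 : rP f q n σ / (rW f σ)^2 = rP f q n σ * ((rW f σ)^2)⁻¹ := by
        rw [div_eq_mul_inv]
      rw [e1]
      have hPnn : 0 ≤ rP f q n σ := (hnn n).2 σ hσa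
      calc rP f q n σ * ((rW f σ)^2)⁻¹
          ≤ (A * D * (C^n * σ^(2*n+1) / ((2*n+1) * n.factorial))) * B := by
            refine mul_le_mul (hP σ hσt) (hinvB σ hσt) (by positivity) ?_
            have hCn : (0:ℝ) < C^n := pow_pos hC0 n
            have : (0:ℝ) < 2*(n:ℝ)+1 := by positivity
            have h1 : 0 ≤ C^n * σ^(2*n+1) / ((2*n+1) * n.factorial) := by positivity
            nlinarith
        _ = B * (A * D * C^n) / ((2*n+1) * n.factorial) * σ^(2*n+1) := by ring
    rw [rV_succ]
    have hint_nonneg : 0 ≤ ∫ σ in (0:ℝ)..s, rP f q n σ / (rW f σ)^2 := by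
      refine intervalIntegral.integral_nonneg hs.1 (fun u hu => ?_)
      exact div_nonneg ((hnn n).2 u (hsub (hs' hu))) (by positivity)
    have step1 : rW f s * (∫ σ in (0:ℝ)..s, rP f q n σ / (rW f σ)^2)
        ≤ D * ∫ σ in (0:ℝ)..s, B * (A * D * C^n) / ((2*n+1) * n.factorial) * σ^(2*n+1) :=
      mul_le_mul (hwD s hs) key hint_nonneg (by linarith)
    refine step1.trans ?_
    rw [intervalIntegral.integral_const_mul, integral_pow,
      zero_pow (by omega : 2*n+1+1 ≠ 0)]
    have hfn1 : ((n+1).factorial : ℝ) = ((n:ℝ)+1) * n.factorial := by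
      rw [Nat.factorial_succ]; push_cast; ring
    have hs0 : (0:ℝ) ≤ s := hs.1
    set x := (n:ℝ) with hx
    have hx0 : (0:ℝ) ≤ x := Nat.cast_nonneg n
    have hCn : (0:ℝ) < C^n := pow_pos hC0 n
    have hP0 : (0:ℝ) ≤ s^(2*(n+1)) := by positivity
    have e2 : D * (B * (A * D * C^n) / ((2*n+1) * n.factorial) * ((s^(2*n+1+1) - 0) / ((2*n+1 : ℕ)+1)))
        = (D * B * A * D * C^n * s^(2*(n+1)) * ((n.factorial:ℝ))⁻¹)
          * (((2*x+1))⁻¹ * ((2*x+2))⁻¹) := by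
      push_cast
      rw [show s^(2*n+1+1) = s^(2*(n+1)) by ring_nf]
      field_simp
      ring
    have e3 : D * (C^(n+1) * s^(2*(n+1)) / (n+1).factorial)
        = (D * B * A * D * C^n * s^(2*(n+1)) * ((n.factorial:ℝ))⁻¹) * ((x+1))⁻¹ := by
      rw [hfn1, hCdef]
      field_simp
      ring
    rw [e2, e3]
    have hK : (0:ℝ) ≤ D * B * A * D * C^n * s^(2*(n+1)) * ((n.factorial:ℝ))⁻¹ := by positivity
    refine mul_le_mul_of_nonneg_left ?_ hK
    rw [← mul_inv]
    refine inv_anti₀ (by positivity) (by nlinarith)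
  intro n
  induction n with
  | zero =>
      have base : ∀ s ∈ Icc (0:ℝ) t, rV f q 0 s ≤ D * (C^0 * s^(2*0) / (0:ℕ).factorial) := by
        intro s hs
        simpa [rV] using hwD s hs
      exact ⟨base, hVP 0 base⟩
  | succ n ih => exact ⟨hPV n ih.2, hVP (n+1) (hPV n ih.2)⟩

end

/-- Riccati driving function comparison: if `f' = -f² - H` on `[0,a)`,
`H ≥ K` with `H, K` continuous, then the solution `g` of `g' = -g² - K` with
`g 0 = f 0` exists on at least the interval `[0,a)`, and `f ≤ g` there. -/
theorem stmt_18 (a : ℝ) (ha : 0 < a) (H K f : ℝ → ℝ)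
    (hH : ContinuousOn H (Set.Ico 0 a)) (hK : ContinuousOn K (Set.Ico 0 a))
    (hHK : ∀ t ∈ Set.Ico (0 : ℝ) a, K t ≤ H t)
    (hfc : ContinuousOn f (Set.Ico 0 a))
    (hf : ∀ t ∈ Set.Ioo (0 : ℝ) a, HasDerivAt f (-(f t) ^ 2 - H t) t) :
    ∃ g : ℝ → ℝ, g 0 = f 0 ∧ ContinuousOn g (Set.Ico 0 a) ∧
      (∀ t ∈ Set.Ioo (0 : ℝ) a, HasDerivAt g (-(g t) ^ 2 - K t) t) ∧
      ∀ t ∈ Set.Ico (0 : ℝ) a, f t ≤ g t := by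
  set q : ℝ → ℝ := fun t => H t - K t with hqdef
  have hqc : ContinuousOn q (Ico 0 a) := hH.sub hK
  have hq0 : ∀ t ∈ Ico (0:ℝ) a, 0 ≤ q t := fun t ht => sub_nonneg.2 (hHK t ht)
  have hw : ContinuousOn (rW f) (Ico 0 a) := rW_cont hfc
  have hcontn := rVP_cont hfc hqc
  have hnn := rVP_nonneg (f := f) hq0
  set w : ℝ → ℝ := rW f with hwdef
  set v : ℝ → ℝ := fun t => ∑' n, rV f q n t with hvdef
  set p : ℝ → ℝ := fun t => ∑' n, rP f q n t with hpdef
  have hwpos : ∀ t, 0 < w t := rW_pos f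
  -- summability
  have hsumm : ∀ t ∈ Ico (0:ℝ) a,
      Summable (fun n => rV f q n t) ∧ Summable (fun n => rP f q n t) := by
    intro t ht
    obtain ⟨D, A, C, hD1, hA1, hC1, hbd⟩ := rVP_bound hfc hqc hq0 ht
    have ht0 : (0:ℝ) ≤ t := ht.1
    have hC0 : (0:ℝ) < C := lt_of_lt_of_le one_pos hC1
    have htt : t ∈ Icc (0:ℝ) t := ⟨ht0, le_refl t⟩
    constructor
    · refine Summable.of_nonneg_of_le (fun n => (hnn n).1 t ht) (fun n => ?_)
        ((Real.summable_pow_div_factorial (C*t^2)).mul_left D)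
      refine ((hbd n).1 t htt).trans_eq ?_
      rw [mul_pow, ← pow_mul]
    · refine Summable.of_nonneg_of_le (fun n => (hnn n).2 t ht) (fun n => ?_)
        ((Real.summable_pow_div_factorial (C*t^2)).mul_left (A*D*t))
      refine ((hbd n).2 t htt).trans ?_
      have hF : (0:ℝ) < n.factorial := by exact_mod_cast n.factorial_pos
      have h1 : (n.factorial:ℝ) ≤ (2*(n:ℝ)+1) * n.factorial := by
        nlinarith [Nat.cast_nonneg (α := ℝ) n]
      calc A * D * (C^n * t^(2*n+1) / ((2*(n:ℝ)+1) * n.factorial))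
          ≤ A * D * (C^n * t^(2*n+1) / n.factorial) := by
            refine mul_le_mul_of_nonneg_left
              (div_le_div_of_nonneg_left ?_ hF h1)
              (by nlinarith)
            exact mul_nonneg (pow_nonneg hC0.le _) (pow_nonneg ht0 _)
        _ = A * D * t * ((C*t^2)^n / n.factorial) := by
            rw [mul_pow, ← pow_mul, pow_succ]
            ring
  -- p as an integral of v
  have hpeq : ∀ t ∈ Ico (0:ℝ) a, p t = ∫ τ in (0:ℝ)..t, q τ * v τ * w τ := by
    intro t ht
    have ht0 : (0:ℝ) ≤ t := ht.1
    have hInt : ∀ n : ℕ, Integrable (fun τ => q τ * rV f q n τ * w τ)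
        (volume.restrict (Ioc 0 t)) := fun n =>
      (contIco_integrableOn ((hqc.mul (hcontn n).1).mul hw) ht).mono_set Ioc_subset_Icc_self
    have hnorm : ∀ n : ℕ,
        (∫ τ in Ioc (0:ℝ) t, ‖q τ * rV f q n τ * w τ‖) = rP f q n t := by
      intro n
      have e : EqOn (fun τ => ‖q τ * rV f q n τ * w τ‖) (fun τ => q τ * rV f q n τ * w τ)
          (Ioc 0 t) := by
        intro τ hτ
        have hτ' : τ ∈ Ico (0:ℝ) a := ⟨hτ.1.le, lt_of_le_of_lt hτ.2 ht.2⟩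
        exact Real.norm_of_nonneg
          (mul_nonneg (mul_nonneg (hq0 τ hτ') ((hnn n).1 τ hτ')) (hwpos τ).le)
      rw [setIntegral_congr_fun measurableSet_Ioc e, ← intervalIntegral.integral_of_le ht0]
      rfl
    have hsum2 : Summable (fun n => ∫ τ in Ioc (0:ℝ) t, ‖q τ * rV f q n τ * w τ‖) := by
      simp_rw [hnorm]; exact (hsumm t ht).2
    have hswap := MeasureTheory.integral_tsum_of_summable_integral_norm hInt hsum2
    rw [intervalIntegral.integral_of_le ht0]
    calc p t = ∑' n, rP f q n t := rfl
      _ = ∑' n, ∫ τ in Ioc (0:ℝ) t, q τ * rV f q n τ * w τ := by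
          refine tsum_congr (fun n => ?_)
          rw [← intervalIntegral.integral_of_le ht0]; rfl
      _ = ∫ τ in Ioc (0:ℝ) t, ∑' n, q τ * rV f q n τ * w τ := hswap
      _ = ∫ τ in Ioc (0:ℝ) t, q τ * v τ * w τ := by
          refine integral_congr_ae (ae_of_all _ (fun τ => ?_))
          show (∑' n, q τ * rV f q n τ * w τ) = q τ * v τ * w τ
          have e1 : (fun n => q τ * rV f q n τ * w τ) = fun n => (q τ * w τ) * rV f q n τ := by
            funext n; ring
          rw [e1, tsum_mul_left]
          show (q τ * w τ) * v τ = q τ * v τ * w τ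
          ring
  -- v via integral of p
  have hveq : ∀ t ∈ Ico (0:ℝ) a, v t = w t + w t * ∫ s in (0:ℝ)..t, p s / (w s)^2 := by
    intro t ht
    have ht0 : (0:ℝ) ≤ t := ht.1
    have hwne : ∀ s, w s ≠ 0 := fun s => (hwpos s).ne'
    have hInt : ∀ n : ℕ, Integrable (fun s => rP f q n s / (w s)^2)
        (volume.restrict (Ioc 0 t)) := by
      intro n
      have hc : ContinuousOn (fun s => rP f q n s / (w s)^2) (Ico 0 a) :=
        (hcontn n).2.div (hw.pow 2) (fun x _ => pow_ne_zero 2 (hwpos x).ne')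
      exact (contIco_integrableOn hc ht).mono_set Ioc_subset_Icc_self
    have hGn : ∀ n : ℕ, (∫ s in Ioc (0:ℝ) t, rP f q n s / (w s)^2) = rV f q (n+1) t / w t := by
      intro n
      rw [← intervalIntegral.integral_of_le ht0, rV_succ]
      exact (mul_div_cancel_left₀ _ (hwne t)).symm
    have hnorm : ∀ n : ℕ,
        (∫ s in Ioc (0:ℝ) t, ‖rP f q n s / (w s)^2‖) = rV f q (n+1) t / w t := by
      intro n
      rw [← hGn n]
      refine setIntegral_congr_fun measurableSet_Ioc (fun s hs => ?_)
      have hs' : s ∈ Ico (0:ℝ) a := ⟨hs.1.le, lt_of_le_of_lt hs.2 ht.2⟩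
      exact Real.norm_of_nonneg (div_nonneg ((hnn n).2 s hs') (by positivity))
    have hsum2 : Summable fun n => ∫ s in Ioc (0:ℝ) t, ‖rP f q n s / (w s)^2‖ := by
      simp_rw [hnorm]
      exact (((summable_nat_add_iff 1).2 (hsumm t ht).1)).div_const _
    have hswap := MeasureTheory.integral_tsum_of_summable_integral_norm hInt hsum2
    have e1 : (∫ s in (0:ℝ)..t, p s / (w s)^2) = ∑' n, rV f q (n+1) t / w t := by
      rw [intervalIntegral.integral_of_le ht0]
      calc (∫ s in Ioc (0:ℝ) t, p s / (w s)^2)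
          = ∫ s in Ioc (0:ℝ) t, ∑' n, rP f q n s / (w s)^2 := by
            refine integral_congr_ae (ae_of_all _ (fun s => ?_))
            show p s / (w s)^2 = _
            rw [hpdef]
            exact tsum_div_const.symm
        _ = ∑' n, ∫ s in Ioc (0:ℝ) t, rP f q n s / (w s)^2 := hswap.symm
        _ = ∑' n, rV f q (n+1) t / w t := tsum_congr hGn
    have e2 : (∑' n, rV f q (n+1) t / w t) = (v t - w t) / w t := by
      rw [tsum_div_const]
      congr 1
      have h3 := Summable.tsum_eq_zero_add (hsumm t ht).1
      have h4 : rV f q 0 t = w t := rfl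
      rw [h4] at h3
      have h5 : v t = ∑' n, rV f q n t := rfl
      rw [h5, h3]
      ring
    rw [e1, e2, ← mul_div_assoc, mul_comm (w t), mul_div_assoc, div_self (hwne t), mul_one]
    ring
  -- measurability of v
  have hvmeas : ∀ b ∈ Ico (0:ℝ) a, AEStronglyMeasurable v (volume.restrict (Icc 0 b)) := by
    intro b hb
    refine aestronglyMeasurable_of_tendsto_ae (atTop : Filter ℕ)
      (f := fun N τ => ∑ n ∈ Finset.range N, rV f q n τ) (fun N => ?_) ?_
    · exact ((continuousOn_finset_sum (Finset.range N) (fun n _ => (hcontn n).1)).mono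
        (Icc_subset_Ico_right hb.2)).aestronglyMeasurable measurableSet_Icc
    · filter_upwards [ae_restrict_mem measurableSet_Icc] with τ hτ
      exact ((hsumm τ (Icc_subset_Ico_right hb.2 hτ)).1).hasSum.tendsto_sum_nat
  -- integrability of q v w on compacts
  have hqvw_int : ∀ b ∈ Ico (0:ℝ) a, IntegrableOn (fun τ => q τ * v τ * w τ) (Icc 0 b) := by
    intro b hb
    have hsub : Icc (0:ℝ) b ⊆ Ico 0 a := Icc_subset_Ico_right hb.2
    obtain ⟨D, A, C, hD1, hA1, hC1, hbd⟩ := rVP_bound hfc hqc hq0 hb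
    have hC0 : (0:ℝ) < C := lt_of_lt_of_le one_pos hC1
    have hsumM : Summable (fun n : ℕ => D * ((C*b^2)^n / n.factorial)) :=
      (Real.summable_pow_div_factorial _).mul_left D
    set M := ∑' n : ℕ, D * ((C*b^2)^n / n.factorial) with hM
    have hvb : ∀ s ∈ Icc (0:ℝ) b, v s ≤ M := by
      intro s hs
      refine Summable.tsum_le_tsum (fun n => ?_) (hsumm s (hsub hs)).1 hsumM
      refine ((hbd n).1 s hs).trans ?_
      have h2 : s^(2*n) ≤ b^(2*n) := pow_le_pow_left₀ hs.1 hs.2 _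
      have h3 : C^n * s^(2*n) ≤ C^n * b^(2*n) :=
        mul_le_mul_of_nonneg_left h2 (pow_nonneg hC0.le n)
      rw [mul_pow, ← pow_mul]
      have hF : (0:ℝ) < n.factorial := by exact_mod_cast n.factorial_pos
      have hF : (0:ℝ) < n.factorial := by exact_mod_cast n.factorial_pos
      exact mul_le_mul_of_nonneg_left ((div_le_div_iff_of_pos_right hF).2 h3) (by nlinarith)
    obtain ⟨A₂, hA₂⟩ := isCompact_Icc.exists_bound_of_continuousOn ((hqc.mul hw).mono hsub)
    have hA₂0 : (0:ℝ) ≤ A₂ := (norm_nonneg _).trans (hA₂ 0 ⟨le_refl 0, hb.1⟩)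
    have hmeas : AEStronglyMeasurable (fun τ => q τ * v τ * w τ)
        (volume.restrict (Icc (0:ℝ) b)) :=
      (((hqc.mono hsub).aestronglyMeasurable measurableSet_Icc).mul (hvmeas b hb)).mul
        ((hw.mono hsub).aestronglyMeasurable measurableSet_Icc)
    refine ⟨hmeas, HasFiniteIntegral.restrict_of_bounded (C := A₂ * M) measure_Icc_lt_top ?_⟩
    filter_upwards [ae_restrict_mem measurableSet_Icc] with τ hτ
    have hτ' : τ ∈ Ico (0:ℝ) a := hsub hτ
    have hv0' : 0 ≤ v τ := tsum_nonneg fun n => (hnn n).1 τ hτ'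
    calc ‖q τ * v τ * w τ‖ = ‖q τ * w τ‖ * v τ := by
          rw [show q τ * v τ * w τ = (q τ * w τ) * v τ from by ring, norm_mul,
            Real.norm_of_nonneg hv0']
      _ ≤ A₂ * M := mul_le_mul (hA₂ τ hτ) (hvb τ hτ) hv0' hA₂0
  -- continuity of p and v
  have hpc : ContinuousOn p (Ico 0 a) :=
    (primCont (fun b hb => hqvw_int b hb)).congr (fun t ht => hpeq t ht)
  have hpw2c : ContinuousOn (fun s => p s / (w s)^2) (Ico 0 a) :=
    hpc.div (hw.pow 2) (fun x _ => pow_ne_zero 2 (hwpos x).ne')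
  have hvc : ContinuousOn v (Ico 0 a) := by
    have h1 : ContinuousOn (fun t => ∫ s in (0:ℝ)..t, p s/(w s)^2) (Ico 0 a) :=
      primCont (fun b hb => contIco_integrableOn hpw2c hb)
    exact (hw.add (hw.mul h1)).congr (fun t ht => hveq t ht)
  have hv0 : ∀ t ∈ Ico (0:ℝ) a, 0 < v t := by
    intro t ht
    have h1 := Summable.le_tsum (hsumm t ht).1 0 (fun j _ => (hnn j).1 t ht)
    exact lt_of_lt_of_le (hwpos t) h1
  have hp0 : ∀ t ∈ Ico (0:ℝ) a, 0 ≤ p t := fun t ht => tsum_nonneg (fun n => (hnn n).2 t ht)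
  have hwv_ne : ∀ t ∈ Ico (0:ℝ) a, w t * v t ≠ 0 :=
    fun t ht => (mul_pos (hwpos t) (hv0 t ht)).ne'
  refine ⟨fun u => f u + p u / (w u * v u), ?_, ?_, ?_, ?_⟩
  · have hp00 : p 0 = 0 := by
      have h0 : ∀ n : ℕ, rP f q n 0 = 0 := fun n => intervalIntegral.integral_same
      show (∑' n, rP f q n 0) = 0
      simp [h0]
    show f 0 + p 0 / (w 0 * v 0) = f 0
    rw [hp00]
    simp
  · exact hfc.add (hpc.div (hw.mul hvc) hwv_ne)
  · intro t ht
    have htIco : t ∈ Ico (0:ℝ) a := ⟨ht.1.le, ht.2⟩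
    have hmem : Ico (0:ℝ) a ∈ nhds t :=
      mem_nhds_iff.mpr ⟨Ioo 0 a, fun x hx => ⟨hx.1.le, hx.2⟩, isOpen_Ioo, ht⟩
    have II : ∀ {h : ℝ → ℝ}, ContinuousOn h (Ico 0 a) → IntervalIntegrable h volume 0 t := by
      intro h hc
      refine ContinuousOn.intervalIntegrable ?_
      rw [uIcc_of_le ht.1.le]
      exact hc.mono (Icc_subset_Ico_right ht.2)
    have SM : ∀ {h : ℝ → ℝ}, ContinuousOn h (Ico 0 a) →
        StronglyMeasurableAtFilter h (nhds t) volume :=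
      fun hc => ⟨Ico 0 a, hmem, hc.aestronglyMeasurable measurableSet_Ico⟩
    have CA : ∀ {h : ℝ → ℝ}, ContinuousOn h (Ico 0 a) → ContinuousAt h t :=
      fun hc => hc.continuousAt hmem
    have hF' : HasDerivAt (fun u => ∫ s in (0:ℝ)..u, f s) (f t) t :=
      intervalIntegral.integral_hasDerivAt_right (II hfc) (SM hfc) (CA hfc)
    have hw' : HasDerivAt w (f t * w t) t := by
      have h1 := hF'.exp
      have h2 : w t = Real.exp (∫ s in (0:ℝ)..t, f s) := rfl
      rw [show f t * w t = Real.exp (∫ s in (0:ℝ)..t, f s) * f t from by rw [h2]; ring]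
      exact h1
    have hqvwc : ContinuousOn (fun τ => q τ * v τ * w τ) (Ico 0 a) := (hqc.mul hvc).mul hw
    have hp' : HasDerivAt p (q t * v t * w t) t := by
      have h1 : HasDerivAt (fun u => ∫ τ in (0:ℝ)..u, q τ * v τ * w τ) (q t * v t * w t) t :=
        intervalIntegral.integral_hasDerivAt_right (II hqvwc) (SM hqvwc) (CA hqvwc)
      refine h1.congr_of_eventuallyEq ?_
      filter_upwards [hmem] with u hu
      exact hpeq u hu
    have hprim' : HasDerivAt (fun u => ∫ s in (0:ℝ)..u, p s/(w s)^2) (p t/(w t)^2) t :=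
      intervalIntegral.integral_hasDerivAt_right (II hpw2c) (SM hpw2c) (CA hpw2c)
    have hwne : w t ≠ 0 := (hwpos t).ne'
    have hvne : v t ≠ 0 := (hv0 t htIco).ne'
    have hv' : HasDerivAt v (f t * v t + p t / w t) t := by
      have h1 : HasDerivAt (fun u => w u + w u * ∫ s in (0:ℝ)..u, p s/(w s)^2)
          (f t * w t + ((f t * w t) * (∫ s in (0:ℝ)..t, p s/(w s)^2)
            + w t * (p t/(w t)^2))) t := hw'.add (hw'.mul hprim')
      have h2 := h1.congr_of_eventuallyEq
        (by filter_upwards [hmem] with u hu; exact hveq u hu)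
      refine h2.congr_deriv ?_
      rw [hveq t htIco]
      field_simp
      ring
    have hwv' : HasDerivAt (fun u => w u * v u)
        (f t * w t * v t + w t * (f t * v t + p t / w t)) t := hw'.mul hv'
    have hdiv : HasDerivAt (fun u => p u / (w u * v u))
        ((q t * v t * w t * (w t * v t)
          - p t * (f t * w t * v t + w t * (f t * v t + p t / w t))) / (w t * v t)^2) t :=
      hp'.div hwv' (hwv_ne t htIco)
    have hsum' := (hf t ht).add hdiv
    refine hsum'.congr_deriv ?_
    have hqt : q t = H t - K t := rfl
    field_simp
    ring
  · intro t ht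
    exact le_add_of_nonneg_right
      (div_nonneg (hp0 t ht) (mul_nonneg (hwpos t).le (hv0 t ht).le))
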